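/- arXiv:1812.05300 — 2 statements merged into one kernel-verified Lean document; each statement's English description precedes it below -/
import Mathlib

section
/- Monotonicity estimate (abstract form): Let σ₁, σ₂ : Ω → ℝ be measurable with σ₁ ≥ c > 0 a.e., and let u₁, u₂ ∈ H¹(Ω) satisfy the weak equations ∫ σⱼ ∇uⱼ · ∇v = ⟨g, v|∂Ω⟩ for all test functions v (same boundary data g). Then, writing Qⱼ = ∫ σⱼ |∇uⱼ|², one has Q₂ - Q₁ ≥ ∫ (σ₂/σ₁)(σ₁ - σ₂)|∇u₂|², as a consequence of the algebraic identity Q₂ - Q₁ = ∫ σ₁|∇u₁ - (σ₂/σ₁)∇u₂|² + ∫ (σ₂ - σ₂²/σ₁)|∇u₂|² which holds whenever ∫ σ₁ ∇u₁·∇u₂ = ∫ σ₂ |∇u₂|² = Q₂ and the integrals are finite. -/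
open MeasureTheory RealInnerProductSpace

/-- Abstract monotonicity estimate: if `u₁, u₂` (represented through their gradients
`f₁, f₂`) solve the weak conductivity equations with the same Neumann data, so that
both variational identities hold, then `Q₂ - Q₁ ≥ ∫ (σ₂/σ₁)(σ₁-σ₂)|f₂|²`. -/
theorem stmt2 {Ω : Type*} [MeasurableSpace Ω] (μ : Measure Ω)
    {E : Type*} [NormedAddCommGroup E] [InnerProductSpace ℝ E]
    (σ₁ σ₂ : Ω → ℝ) (f₁ f₂ : Ω → E) (c : ℝ) (hc : 0 < c)
    (hσ₁ : ∀ᵐ x ∂μ, c ≤ σ₁ x)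
    (hi1 : Integrable (fun x => σ₁ x * ‖f₁ x‖ ^ 2) μ)
    (hi2 : Integrable (fun x => σ₂ x * ‖f₂ x‖ ^ 2) μ)
    (hi12 : Integrable (fun x => σ₁ x * ⟪f₁ x, f₂ x⟫) μ)
    (hi21 : Integrable (fun x => σ₂ x * ⟪f₁ x, f₂ x⟫) μ)
    (hi3 : Integrable (fun x => σ₂ x ^ 2 / σ₁ x * ‖f₂ x‖ ^ 2) μ)
    (hvar1 : ∫ x, σ₁ x * ⟪f₁ x, f₂ x⟫ ∂μ = ∫ x, σ₂ x * ‖f₂ x‖ ^ 2 ∂μ)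
    (hvar2 : ∫ x, σ₂ x * ⟪f₁ x, f₂ x⟫ ∂μ = ∫ x, σ₁ x * ‖f₁ x‖ ^ 2 ∂μ) :
    (∫ x, σ₂ x * ‖f₂ x‖ ^ 2 ∂μ) - ∫ x, σ₁ x * ‖f₁ x‖ ^ 2 ∂μ
      ≥ ∫ x, σ₂ x / σ₁ x * (σ₁ x - σ₂ x) * ‖f₂ x‖ ^ 2 ∂μ := by
  -- G = B - D
  have hG : ∫ x, σ₂ x / σ₁ x * (σ₁ x - σ₂ x) * ‖f₂ x‖ ^ 2 ∂μ
      = (∫ x, σ₂ x * ‖f₂ x‖ ^ 2 ∂μ) - ∫ x, σ₂ x ^ 2 / σ₁ x * ‖f₂ x‖ ^ 2 ∂μ := by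
    rw [← integral_sub hi2 hi3]
    refine integral_congr_ae ?_
    filter_upwards [hσ₁] with x hx
    have h1 : σ₁ x ≠ 0 := (hc.trans_le hx).ne'
    field_simp
  -- D ≥ A
  have hF : Integrable (fun x => σ₁ x * ‖f₁ x‖ ^ 2 - 2 * (σ₂ x * ⟪f₁ x, f₂ x⟫)
      + σ₂ x ^ 2 / σ₁ x * ‖f₂ x‖ ^ 2) μ := (hi1.sub (hi21.const_mul 2)).add hi3
  have hFnn : 0 ≤ ∫ x, (σ₁ x * ‖f₁ x‖ ^ 2 - 2 * (σ₂ x * ⟪f₁ x, f₂ x⟫)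
      + σ₂ x ^ 2 / σ₁ x * ‖f₂ x‖ ^ 2) ∂μ := by
    refine integral_nonneg_of_ae ?_
    filter_upwards [hσ₁] with x hx
    simp only [Pi.zero_apply]
    have h1 : (0:ℝ) < σ₁ x := lt_of_lt_of_le hc hx
    have key : (0:ℝ) ≤ ‖σ₁ x • f₁ x - σ₂ x • f₂ x‖ ^ 2 := by positivity
    have hexp : ‖σ₁ x • f₁ x - σ₂ x • f₂ x‖ ^ 2
        = σ₁ x ^ 2 * ‖f₁ x‖ ^ 2 - 2 * (σ₁ x * (σ₂ x * ⟪f₁ x, f₂ x⟫))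
          + σ₂ x ^ 2 * ‖f₂ x‖ ^ 2 := by
      rw [norm_sub_sq_real, real_inner_smul_left, real_inner_smul_right,
        norm_smul, norm_smul, mul_pow, mul_pow]
      simp only [Real.norm_eq_abs, sq_abs]
    rw [hexp] at key
    have h2 : σ₁ x * (σ₁ x * ‖f₁ x‖ ^ 2 - 2 * (σ₂ x * ⟪f₁ x, f₂ x⟫)
        + σ₂ x ^ 2 / σ₁ x * ‖f₂ x‖ ^ 2)
        = σ₁ x ^ 2 * ‖f₁ x‖ ^ 2 - 2 * (σ₁ x * (σ₂ x * ⟪f₁ x, f₂ x⟫))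
          + σ₂ x ^ 2 * ‖f₂ x‖ ^ 2 := by
      field_simp
    have h3 : 0 ≤ σ₁ x * (σ₁ x * ‖f₁ x‖ ^ 2 - 2 * (σ₂ x * ⟪f₁ x, f₂ x⟫)
        + σ₂ x ^ 2 / σ₁ x * ‖f₂ x‖ ^ 2) := h2 ▸ key
    nlinarith [h3, h1]
  have hsplit : ∫ x, (σ₁ x * ‖f₁ x‖ ^ 2 - 2 * (σ₂ x * ⟪f₁ x, f₂ x⟫)
      + σ₂ x ^ 2 / σ₁ x * ‖f₂ x‖ ^ 2) ∂μ
      = (∫ x, σ₁ x * ‖f₁ x‖ ^ 2 ∂μ) - 2 * (∫ x, σ₂ x * ⟪f₁ x, f₂ x⟫ ∂μ)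
        + ∫ x, σ₂ x ^ 2 / σ₁ x * ‖f₂ x‖ ^ 2 ∂μ := by
    have hsub : Integrable (fun x => σ₁ x * ‖f₁ x‖ ^ 2 - 2 * (σ₂ x * ⟪f₁ x, f₂ x⟫)) μ :=
      hi1.sub (hi21.const_mul 2)
    have hmul : Integrable (fun x => 2 * (σ₂ x * ⟪f₁ x, f₂ x⟫)) μ := hi21.const_mul 2
    rw [integral_add hsub hi3, integral_sub hi1 hmul, integral_const_mul]
  rw [hsplit, hvar2] at hFnn
  rw [hG]
  linarith
end

section
/- For a piecewise continuous κ : Ω → ℝ with supp κ ⊆ Ω and Ω \ supp κ connected, one has cl(inn-supp κ) = supp κ = outsupp κ. -/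
open MeasureTheory

/-- `U` is a relatively open subset of `cl Ω`. -/
def RelOpenIn {n : ℕ} (Ω U : Set (EuclideanSpace ℝ (Fin n))) : Prop :=
  ∃ V : Set (EuclideanSpace ℝ (Fin n)), IsOpen V ∧ U = V ∩ closure Ω

/-- `κ = 0` almost everywhere on `U`. -/
def VanishesAEOn {n : ℕ} (κ : EuclideanSpace ℝ (Fin n) → ℝ)
    (U : Set (EuclideanSpace ℝ (Fin n))) : Prop :=
  ∀ᵐ x, x ∈ U → κ x = 0

/-- `U` is connected to the boundary `∂Ω`: `U ∩ Ω` is connected and `U` meets `∂Ω`. -/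
def ConnectedToBoundary {n : ℕ} (Ω U : Set (EuclideanSpace ℝ (Fin n))) : Prop :=
  IsConnected (U ∩ Ω) ∧ (U ∩ frontier Ω).Nonempty

/-- The (essential) support of `κ` in `cl Ω`. -/
def suppIn {n : ℕ} (Ω : Set (EuclideanSpace ℝ (Fin n)))
    (κ : EuclideanSpace ℝ (Fin n) → ℝ) : Set (EuclideanSpace ℝ (Fin n)) :=
  closure Ω \ ⋃₀ {U | RelOpenIn Ω U ∧ VanishesAEOn κ U}

/-- The outer support of `κ`. -/
def outSupp {n : ℕ} (Ω : Set (EuclideanSpace ℝ (Fin n)))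
    (κ : EuclideanSpace ℝ (Fin n) → ℝ) : Set (EuclideanSpace ℝ (Fin n)) :=
  closure Ω \ ⋃₀ {U | RelOpenIn Ω U ∧ ConnectedToBoundary Ω U ∧ VanishesAEOn κ U}

/-- The inner support of `κ`. -/
def innSupp {n : ℕ} (Ω : Set (EuclideanSpace ℝ (Fin n)))
    (κ : EuclideanSpace ℝ (Fin n) → ℝ) : Set (EuclideanSpace ℝ (Fin n)) :=
  ⋃₀ {U | IsOpen U ∧ U ⊆ Ω ∧ 0 < essInf (fun x => |κ x|) (volume.restrict U)}

/-- `out M`, the outer support of the characteristic function of `M`. -/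
def outSet {n : ℕ} (Ω M : Set (EuclideanSpace ℝ (Fin n))) : Set (EuclideanSpace ℝ (Fin n)) :=
  outSupp Ω (M.indicator fun _ => (1 : ℝ))

section Aux

open Set Filter Topology

/-- The union of all relatively open a.e.-vanishing sets is itself relatively open and
a.e.-vanishing (by the Lindelöf property). -/
lemma suppIn_family_max {n : ℕ} (Ω : Set (EuclideanSpace ℝ (Fin n)))
    (κ : EuclideanSpace ℝ (Fin n) → ℝ) :
    RelOpenIn Ω (⋃₀ {U | RelOpenIn Ω U ∧ VanishesAEOn κ U}) ∧
    VanishesAEOn κ (⋃₀ {U | RelOpenIn Ω U ∧ VanishesAEOn κ U}) := by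
  set F := {U | RelOpenIn Ω U ∧ VanishesAEOn κ U} with hF
  set 𝒱 := {V : Set (EuclideanSpace ℝ (Fin n)) | IsOpen V ∧ VanishesAEOn κ (V ∩ closure Ω)}
    with h𝒱
  have hFV : ⋃₀ F = (⋃₀ 𝒱) ∩ closure Ω := by
    apply Set.Subset.antisymm
    · rintro x ⟨U, ⟨⟨V, hVo, rfl⟩, hvan⟩, hx⟩
      exact ⟨⟨V, ⟨hVo, hvan⟩, hx.1⟩, hx.2⟩
    · rintro x ⟨⟨V, hV, hxV⟩, hxc⟩
      exact ⟨V ∩ closure Ω, ⟨⟨V, hV.1, rfl⟩, hV.2⟩, hxV, hxc⟩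
  obtain ⟨T, hTc, hTsub, hTU⟩ :=
    TopologicalSpace.isOpen_sUnion_countable 𝒱 (fun V hV => hV.1)
  constructor
  · exact ⟨⋃₀ 𝒱, isOpen_sUnion (fun V hV => hV.1), hFV⟩
  · have h1 : ∀ᵐ x, ∀ V ∈ T, x ∈ V ∩ closure Ω → κ x = 0 :=
      (MeasureTheory.ae_ball_iff hTc).2 (fun V hV => (hTsub hV).2)
    filter_upwards [h1] with x hx hxF
    rw [hFV, ← hTU] at hxF
    obtain ⟨⟨V, hVT, hxV⟩, hxc⟩ := hxF
    exact hx V hVT ⟨hxV, hxc⟩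

end Aux

theorem stmt12' {n : ℕ} (hn : 2 ≤ n) (Ω : Set (EuclideanSpace ℝ (Fin n)))
    (hΩo : IsOpen Ω) (hΩb : Bornology.IsBounded Ω) (hΩc : IsConnected Ω)
    (κ : EuclideanSpace ℝ (Fin n) → ℝ) (hκ : Measurable κ)
    (O : Set (EuclideanSpace ℝ (Fin n))) (hOo : IsOpen O) (hOΩ : O ⊆ Ω)
    (hnull : volume (Ω \ O) = 0) (hcont : ContinuousOn κ O)
    (hsupp : suppIn Ω κ ⊆ Ω) (hconn : IsConnected (Ω \ suppIn Ω κ)) :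
    closure (innSupp Ω κ) = suppIn Ω κ ∧ suppIn Ω κ = outSupp Ω κ := by
  classical
  obtain ⟨hSrel, hSvan⟩ := suppIn_family_max Ω κ
  set F := {U | RelOpenIn Ω U ∧ VanishesAEOn κ U} with hF
  set S := ⋃₀ F with hS
  obtain ⟨V, hVo, hSV⟩ := hSrel
  have hSsub : S ⊆ closure Ω := by rw [hSV]; exact Set.inter_subset_right
  have hsupp_eq : suppIn Ω κ = closure Ω \ S := rfl
  have hsupp_closed : IsClosed (suppIn Ω κ) := by
    rw [hsupp_eq, hSV, Set.diff_inter_self_eq_diff]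
    exact isClosed_closure.sdiff hVo
  have hScompl : closure Ω \ suppIn Ω κ = S := by
    rw [hsupp_eq]; exact Set.diff_diff_cancel_left hSsub
  -- innSupp ⊆ suppIn
  have hinn_sub : innSupp Ω κ ⊆ suppIn Ω κ := by
    rintro x ⟨U, ⟨hUo, hUΩ, hUinf⟩, hxU⟩
    refine ⟨subset_closure (hUΩ hxU), fun hxS => ?_⟩
    have hxV : x ∈ V := by
      have hxS' : x ∈ S := hxS
      rw [hSV] at hxS'
      exact hxS'.1
    set W := U ∩ V with hW
    have hWopen : IsOpen W := hUo.inter hVo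
    have hWpos : 0 < volume W := hWopen.measure_pos volume ⟨x, hxU, hxV⟩
    have hbdd : Filter.IsBoundedUnder (· ≥ ·) (ae (volume.restrict U))
        (fun z => |κ z|) :=
      Filter.isBoundedUnder_of ⟨0, fun y => abs_nonneg _⟩
    have hfreq : ∃ᶠ y in (ae (volume.restrict U)), |κ y| ≤ 0 := by
      by_contra hcon
      rw [Filter.not_frequently] at hcon
      have hW0 : ∀ᵐ y ∂(volume.restrict U), y ∉ W := by
        filter_upwards [hcon, MeasureTheory.ae_restrict_of_ae hSvan] with y hy hvan hyW
        apply hy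
        have hyS : y ∈ S := by
          rw [hSV]; exact ⟨hyW.2, subset_closure (hUΩ hyW.1)⟩
        simp [hvan hyS]
      rw [← MeasureTheory.measure_eq_zero_iff_ae_notMem] at hW0
      rw [MeasureTheory.Measure.restrict_apply hWopen.measurableSet,
        Set.inter_eq_self_of_subset_left Set.inter_subset_left] at hW0
      exact absurd hW0 hWpos.ne'
    have : essInf (fun z => |κ z|) (volume.restrict U) ≤ 0 :=
      Filter.liminf_le_of_frequently_le hfreq hbdd
    exact absurd this (not_le.2 hUinf)
  -- suppIn ⊆ closure innSupp
  have hsup_sub : suppIn Ω κ ⊆ closure (innSupp Ω κ) := by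
    intro x hx
    by_contra hxc
    set B := Ω ∩ (closure (innSupp Ω κ))ᶜ with hB
    have hBo : IsOpen B := hΩo.inter isClosed_closure.isOpen_compl
    have hxB : x ∈ B := ⟨hsupp hx, hxc⟩
    have key : ∀ y ∈ B ∩ O, κ y = 0 := by
      rintro y ⟨hyB, hyO⟩
      by_contra hky
      have hc : 0 < |κ y| / 2 := by
        have := abs_pos.2 hky; linarith
      set t : Set ℝ := {v | |κ y| / 2 < |v| ∧ |v| < |κ y| + 1} with ht
      have hto : IsOpen t :=
        (isOpen_Ioi.preimage continuous_abs).inter (isOpen_Iio.preimage continuous_abs)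
      have hUo' : IsOpen (O ∩ κ ⁻¹' t) := hcont.isOpen_inter_preimage hOo hto
      set U := (O ∩ κ ⁻¹' t) ∩ B with hU
      have hUopen : IsOpen U := hUo'.inter hBo
      have hyU : y ∈ U := by
        refine ⟨⟨hyO, ?_, ?_⟩, hyB⟩ <;> [linarith; linarith]
      have hUΩ : U ⊆ Ω := fun z hz => hz.2.1
      have hne : volume.restrict U ≠ 0 := by
        intro h
        rw [MeasureTheory.Measure.restrict_eq_zero] at h
        exact (hUopen.measure_pos volume ⟨y, hyU⟩).ne' h
      haveI : (ae (volume.restrict U)).NeBot := MeasureTheory.ae_neBot.2 hne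
      have hb : ∀ᵐ z ∂(volume.restrict U), |κ y| / 2 ≤ |κ z| ∧ |κ z| ≤ |κ y| + 1 := by
        filter_upwards [MeasureTheory.ae_restrict_mem hUopen.measurableSet] with z hz
        exact ⟨hz.1.2.1.le, hz.1.2.2.le⟩
      have hcob : Filter.IsCoboundedUnder (· ≥ ·) (ae (volume.restrict U))
          (fun z => |κ z|) :=
        Filter.isCoboundedUnder_ge_of_eventually_le _ (hb.mono fun z hz => hz.2)
      have hinf : 0 < essInf (fun z => |κ z|) (volume.restrict U) :=
        lt_of_lt_of_le hc (Filter.le_liminf_of_le hcob (hb.mono fun z hz => hz.1))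
      have : y ∈ innSupp Ω κ := ⟨U, ⟨hUopen, hUΩ, hinf⟩, hyU⟩
      exact hyB.2 (subset_closure this)
    have hvanB : VanishesAEOn κ (B ∩ closure Ω) := by
      have hOae : ∀ᵐ z, z ∉ Ω \ O := by
        rw [MeasureTheory.ae_iff]; simp only [not_not]; exact hnull
      filter_upwards [hOae] with z hz hzB
      have hzΩ : z ∈ Ω := hzB.1.1
      have hzO : z ∈ O := by
        by_contra h; exact hz ⟨hzΩ, h⟩
      exact key z ⟨hzB.1, hzO⟩
    have hxS : x ∈ S := ⟨B ∩ closure Ω, ⟨⟨B, hBo, rfl⟩, hvanB⟩, hxB, hx.1⟩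
    exact hx.2 hxS
  have h1 : closure (innSupp Ω κ) = suppIn Ω κ :=
    Set.Subset.antisymm (closure_minimal hinn_sub hsupp_closed)
      hsup_sub
  refine ⟨h1, ?_⟩
  -- suppIn = outSupp
  apply Set.Subset.antisymm
  · exact Set.diff_subset_diff_right
      (Set.sUnion_subset_sUnion fun U hU => ⟨hU.1, hU.2.2⟩)
  · have hSΩ : S ∩ Ω = Ω \ suppIn Ω κ := by
      ext z
      constructor
      · rintro ⟨hzS, hzΩ⟩
        exact ⟨hzΩ, fun hzsupp => hzsupp.2 hzS⟩
      · rintro ⟨hzΩ, hz⟩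
        refine ⟨?_, hzΩ⟩
        by_contra hzS
        exact hz ⟨subset_closure hzΩ, hzS⟩
    have hctb : ConnectedToBoundary Ω S := by
      constructor
      · rw [hSΩ]; exact hconn
      · haveI : Nonempty (Fin n) := ⟨⟨0, lt_of_lt_of_le two_pos hn⟩⟩
        haveI : Nontrivial (EuclideanSpace ℝ (Fin n)) :=
          inferInstanceAs (Nontrivial (PiLp 2 fun _ : Fin n => ℝ))
        have hfr : (frontier Ω).Nonempty := by
          rw [nonempty_frontier_iff]
          refine ⟨hΩc.nonempty, fun h => ?_⟩
          rw [h] at hΩb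
          exact NormedSpace.unbounded_univ ℝ (EuclideanSpace ℝ (Fin n)) hΩb
        obtain ⟨z, hz⟩ := hfr
        have hzS : z ∈ S := by
          rw [← hScompl]
          refine ⟨frontier_subset_closure hz, fun hzsupp => ?_⟩
          have : z ∈ Ω := hsupp hzsupp
          rw [hΩo.frontier_eq] at hz
          exact hz.2 this
        exact ⟨z, hzS, hz⟩
    have hSmem : S ∈ {U | RelOpenIn Ω U ∧ ConnectedToBoundary Ω U ∧ VanishesAEOn κ U} :=
      ⟨⟨V, hVo, hSV⟩, hctb, hSvan⟩
    exact Set.diff_subset_diff_right (Set.subset_sUnion_of_mem hSmem)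

/-- main -/
theorem stmt12 {n : ℕ} (hn : 2 ≤ n) (Ω : Set (EuclideanSpace ℝ (Fin n)))
    (hΩo : IsOpen Ω) (hΩb : Bornology.IsBounded Ω) (hΩc : IsConnected Ω)
    (κ : EuclideanSpace ℝ (Fin n) → ℝ) (hκ : Measurable κ)
    (O : Set (EuclideanSpace ℝ (Fin n))) (hOo : IsOpen O) (hOΩ : O ⊆ Ω)
    (hnull : volume (Ω \ O) = 0) (hcont : ContinuousOn κ O)
    (hsupp : suppIn Ω κ ⊆ Ω) (hconn : IsConnected (Ω \ suppIn Ω κ)) :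
    closure (innSupp Ω κ) = suppIn Ω κ ∧ suppIn Ω κ = outSupp Ω κ :=
  stmt12' hn Ω hΩo hΩb hΩc κ hκ O hOo hOΩ hnull hcont hsupp hconn
end
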